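/- Let ψ : ℝ → ℂ² be twice differentiable and a γ₊-eigenstate of the harmonic Lévy-Leblond Hamiltonian with γ₊-eigenvalue E, i.e. (H_LL ψ)(x) = E γ₊ ψ(x) for all x. Then bψ is a γ₊-eigenstate with γ₊-eigenvalue E − ω: (H_LL(bψ))(x) = (E − ω) γ₊ (bψ)(x) for all x ∈ ℝ. (This follows from the commutation relation [H_LL, b] = −ω γ₊ b together with [γ₊, b] = 0.) -/

import Mathlib

open Matrix

noncomputable section

/-- The gamma matrix `γ¹ = [[1,0],[0,−1]]`. -/
def γ1 : Matrix (Fin 2) (Fin 2) ℂ := !![1, 0; 0, -1]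

/-- The gamma matrix `γ₊ = [[0,1],[0,0]]`. -/
def γp : Matrix (Fin 2) (Fin 2) ℂ := !![0, 1; 0, 0]

/-- The gamma matrix `γ₋ = [[0,0],[1,0]]`. -/
def γm : Matrix (Fin 2) (Fin 2) ℂ := !![0, 0; 1, 0]

/-- The harmonic Lévy-Leblond Hamiltonian:
`(H_LL ψ)(x) = β γ₋ ψ(x) − i γ¹ ψ′(x) + (k/2) x² γ₊ ψ(x)`. -/
def HLL (β k : ℝ) (ψ : ℝ → (Fin 2 → ℂ)) : ℝ → (Fin 2 → ℂ) :=
  fun x => (β : ℂ) • γm.mulVec (ψ x) - Complex.I • γ1.mulVec (deriv ψ x)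
    + ((k / 2 * x ^ 2 : ℝ) : ℂ) • γp.mulVec (ψ x)

/-- The lowering operator:
`(bψ)(x) = √(βk/2)·x·ψ(x) + ψ′(x) − i√(k/(2β)) γ₊ ψ(x)`. -/
def lower (β k : ℝ) (ψ : ℝ → (Fin 2 → ℂ)) : ℝ → (Fin 2 → ℂ) :=
  fun x => ((Real.sqrt (β * k / 2) * x : ℝ) : ℂ) • ψ x + deriv ψ x
    - (Complex.I * ((Real.sqrt (k / (2 * β)) : ℝ) : ℂ)) • γp.mulVec (ψ x)

/-- The raising operator:
`(b†ψ)(x) = √(βk/2)·x·ψ(x) − ψ′(x) − i√(k/(2β)) γ₊ ψ(x)`. -/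
def raise (β k : ℝ) (ψ : ℝ → (Fin 2 → ℂ)) : ℝ → (Fin 2 → ℂ) :=
  fun x => ((Real.sqrt (β * k / 2) * x : ℝ) : ℂ) • ψ x - deriv ψ x
    - (Complex.I * ((Real.sqrt (k / (2 * β)) : ℝ) : ℂ)) • γp.mulVec (ψ x)

/-- If `ψ` is a twice-differentiable `γ₊`-eigenstate of the harmonic
Lévy-Leblond Hamiltonian with `γ₊`-eigenvalue `E`, then `bψ` is a `γ₊`-eigenstate with
`γ₊`-eigenvalue `E − ω`, where `ω = √(2k/β)`. -/
theorem lower_eigenstate (β k : ℝ) (hβ : 0 < β) (hk : 0 < k) (E : ℂ)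
    (ψ : ℝ → (Fin 2 → ℂ))
    (hψ1 : Differentiable ℝ ψ) (hψ2 : Differentiable ℝ (deriv ψ))
    (heig : ∀ x : ℝ, HLL β k ψ x = E • γp.mulVec (ψ x)) :
    ∀ x : ℝ, HLL β k (lower β k ψ) x
      = (E - ((Real.sqrt (2 * k / β) : ℝ) : ℂ)) • γp.mulVec (lower β k ψ x) := by
  set a : ℝ := Real.sqrt (β * k / 2) with ha
  set c : ℝ := Real.sqrt (k / (2 * β)) with hc
  -- real sqrt identities
  have hbc : β * c = a := by
    rw [hc, ha, show β * k / 2 = β ^ 2 * (k / (2 * β)) by field_simp,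
      Real.sqrt_mul (sq_nonneg β), Real.sqrt_sq hβ.le]
  have hω : Real.sqrt (2 * k / β) = 2 * c := by
    rw [hc, show (2 : ℝ) * k / β = 2 ^ 2 * (k / (2 * β)) by field_simp,
      Real.sqrt_mul (by norm_num), Real.sqrt_sq (by norm_num)]
  have hac : a * c = k / 2 := by
    rw [ha, hc, ← Real.sqrt_mul (by positivity),
      show β * k / 2 * (k / (2 * β)) = (k / 2) ^ 2 by field_simp,
      Real.sqrt_sq (by positivity)]
  -- complex versions
  have Hbc : (β : ℂ) * (c : ℂ) = (a : ℂ) := by exact_mod_cast congrArg Complex.ofReal hbc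
  have Hac : (a : ℂ) * (c : ℂ) = (k : ℂ) / 2 := by exact_mod_cast congrArg Complex.ofReal hac
  -- component HasDerivAt facts
  have hP : ∀ y, HasDerivAt (fun t => ψ t 0) (deriv ψ y 0) y :=
    fun y => hasDerivAt_pi.mp (hψ1 y).hasDerivAt 0
  have hQ : ∀ y, HasDerivAt (fun t => ψ t 1) (deriv ψ y 1) y :=
    fun y => hasDerivAt_pi.mp (hψ1 y).hasDerivAt 1
  have hP1 : ∀ y, HasDerivAt (fun t => deriv ψ t 0) (deriv (deriv ψ) y 0) y :=
    fun y => hasDerivAt_pi.mp (hψ2 y).hasDerivAt 0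
  have hQ1 : ∀ y, HasDerivAt (fun t => deriv ψ t 1) (deriv (deriv ψ) y 1) y :=
    fun y => hasDerivAt_pi.mp (hψ2 y).hasDerivAt 1
  -- scalar eigen equations
  have e0 : ∀ y : ℝ, -(Complex.I * deriv ψ y 0) + (k : ℂ) / 2 * (y : ℂ) ^ 2 * ψ y 1
      = E * ψ y 1 := by
    intro y
    have h0 := congrFun (heig y) 0
    simpa [HLL, γ1, γp, γm, Matrix.mulVec, dotProduct, Fin.sum_univ_two] using h0
  have e1 : ∀ y : ℝ, (β : ℂ) * ψ y 0 + Complex.I * deriv ψ y 1 = 0 := by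
    intro y
    have h1 := congrFun (heig y) 1
    simpa [HLL, γ1, γp, γm, Matrix.mulVec, dotProduct, Fin.sum_univ_two] using h1
  -- solved forms
  have hp' : ∀ y : ℝ, deriv ψ y 0
      = Complex.I * E * ψ y 1 - Complex.I * ((k : ℂ) / 2 * (y : ℂ) ^ 2) * ψ y 1 := by
    intro y
    have := e0 y
    have hI := Complex.I_sq
    linear_combination Complex.I * this + deriv ψ y 0 * hI
  have hq' : ∀ y : ℝ, deriv ψ y 1 = Complex.I * (β : ℂ) * ψ y 0 := by
    intro y
    have := e1 y
    have hI := Complex.I_sq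
    linear_combination (-Complex.I) * this + deriv ψ y 1 * hI
  intro x
  -- second derivatives
  have hq'' : deriv (deriv ψ) x 1 = Complex.I * (β : ℂ) * deriv ψ x 0 := by
    have h1 : (fun t => deriv ψ t 1) = fun t => Complex.I * (β : ℂ) * ψ t 0 := funext hq'
    have h2 : HasDerivAt (fun t => deriv ψ t 1) (Complex.I * (β : ℂ) * deriv ψ x 0) x := by
      rw [h1]; exact (hP x).const_mul _
    exact (hQ1 x).unique h2
  have hx1 : HasDerivAt (fun y : ℝ => ((y : ℝ) : ℂ)) 1 x := by
    simpa using (hasDerivAt_id x).ofReal_comp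
  have hp'' : deriv (deriv ψ) x 0
      = Complex.I * E * deriv ψ x 1
        - (Complex.I * ((k : ℂ) * (x : ℂ)) * ψ x 1
           + Complex.I * ((k : ℂ) / 2 * (x : ℂ) ^ 2) * deriv ψ x 1) := by
    have h1 : (fun t => deriv ψ t 0)
        = fun t => Complex.I * E * ψ t 1 - Complex.I * ((k : ℂ) / 2 * (t : ℂ) ^ 2) * ψ t 1 :=
      funext hp'
    have hx2 : HasDerivAt (fun y : ℝ => ((k : ℂ) / 2 * ((y : ℂ) * (y : ℂ)))) ((k : ℂ) * (x : ℂ)) x := by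
      have := ((hx1.mul hx1).const_mul ((k : ℂ) / 2))
      convert this using 1
      · rfl
      · rfl
      · ring
    have h2 : HasDerivAt (fun t => deriv ψ t 0)
        (Complex.I * E * deriv ψ x 1
          - (Complex.I * ((k : ℂ) * (x : ℂ)) * ψ x 1
             + Complex.I * ((k : ℂ) / 2 * (x : ℂ) ^ 2) * deriv ψ x 1)) x := by
      rw [h1]
      simp only [pow_two]
      have hA := (hQ x).const_mul (Complex.I * E)
      have hB := ((hx2.const_mul Complex.I).mul (hQ x))
      convert hA.sub hB using 1
      · rfl
      · rfl
    exact (hP1 x).unique h2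
  -- derivative of lower
  have hax : HasDerivAt (fun y : ℝ => ((a * y : ℝ) : ℂ)) (a : ℂ) x := by
    simpa using ((hasDerivAt_id x).const_mul a).ofReal_comp
  have hl0 : (fun y => lower β k ψ y 0) = fun y =>
      ((a * y : ℝ) : ℂ) * ψ y 0 + deriv ψ y 0 - Complex.I * (c : ℂ) * ψ y 1 := by
    funext y
    simp [lower, γp, ← ha, ← hc, Matrix.mulVec, dotProduct, Fin.sum_univ_two]
  have hl1 : (fun y => lower β k ψ y 1) = fun y =>
      ((a * y : ℝ) : ℂ) * ψ y 1 + deriv ψ y 1 := by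
    funext y
    simp [lower, γp, ← ha, ← hc, Matrix.mulVec, dotProduct, Fin.sum_univ_two]
  have hD0 : HasDerivAt (fun y => lower β k ψ y 0)
      ((a : ℂ) * ψ x 0 + ((a * x : ℝ) : ℂ) * deriv ψ x 0 + deriv (deriv ψ) x 0
        - Complex.I * (c : ℂ) * deriv ψ x 1) x := by
    rw [hl0]
    exact ((hax.mul (hP x)).add (hP1 x)).sub ((hQ x).const_mul _)
  have hD1 : HasDerivAt (fun y => lower β k ψ y 1)
      ((a : ℂ) * ψ x 1 + ((a * x : ℝ) : ℂ) * deriv ψ x 1 + deriv (deriv ψ) x 1) x := by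
    rw [hl1]
    exact (hax.mul (hQ x)).add (hQ1 x)
  have hLvec : HasDerivAt (lower β k ψ)
      (![(a : ℂ) * ψ x 0 + ((a * x : ℝ) : ℂ) * deriv ψ x 0 + deriv (deriv ψ) x 0
          - Complex.I * (c : ℂ) * deriv ψ x 1,
         (a : ℂ) * ψ x 1 + ((a * x : ℝ) : ℂ) * deriv ψ x 1 + deriv (deriv ψ) x 1]) x := by
    apply hasDerivAt_pi.mpr
    intro i
    fin_cases i
    · simpa using hD0
    · simpa using hD1
  have hdl := hLvec.deriv
  have hlow0 : lower β k ψ x 0 = ((a * x : ℝ) : ℂ) * ψ x 0 + deriv ψ x 0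
      - Complex.I * (c : ℂ) * ψ x 1 := congrFun hl0 x
  have hlow1 : lower β k ψ x 1 = ((a * x : ℝ) : ℂ) * ψ x 1 + deriv ψ x 1 := congrFun hl1 x
  funext i
  fin_cases i
  · simp only [HLL, hω]
    simp [Matrix.mulVec, dotProduct, Fin.sum_univ_two, γ1, γp, γm, hdl, hlow0, hlow1,
      Matrix.vecHead, Matrix.vecTail, Function.comp]
    linear_combination (-Complex.I) * hp'' + (-(Complex.I * (a : ℂ) * (x : ℂ))) * hp' x
      + (-(Complex.I * (c : ℂ))) * e1 x + (Complex.I * ψ x 0) * Hbc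
      + (-(E * deriv ψ x 1) - (a : ℂ) * (x : ℂ) * E * ψ x 1
          + ((a : ℂ) * (k : ℂ) / 2) * (x : ℂ) ^ 3 * ψ x 1
          + ((k : ℂ) / 2) * (x : ℂ) ^ 2 * deriv ψ x 1 + 2 * (c : ℂ) * deriv ψ x 1
          + (k : ℂ) * (x : ℂ) * ψ x 1) * Complex.I_sq
      + (2 * (x : ℂ) * ψ x 1) * Hac
  · simp only [HLL, hω]
    simp [Matrix.mulVec, dotProduct, Fin.sum_univ_two, γ1, γp, γm, hdl, hlow0, hlow1,
      Matrix.vecHead, Matrix.vecTail, Function.comp]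
    linear_combination ((a : ℂ) * (x : ℂ)) * e1 x + Complex.I * hq''
      + ((β : ℂ) * deriv ψ x 0) * Complex.I_sq + (-(Complex.I * ψ x 1)) * Hbc


end
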